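/- arXiv:1705.01033 — 2 statements merged into one kernel-verified Lean document; each statement's English description precedes it below -/
import Mathlib

section
/- Let D be a PVMD (Prüfer v-multiplication domain). Then D is completely integrally closed if and only if ⋂_{n≥1}(I^n)_v = (0) for every proper t-invertible integral t-ideal I of D. -/
open scoped nonZeroDivisors

variable (D : Type*) [CommRing D] [IsDomain D]
variable (K : Type*) [Field K] [Algebra D K] [IsFractionRing D K]

/-- `D` is completely integrally closed (w.r.t. a quotient field `K`). -/
def IsCompletelyIntegrallyClosed : Prop :=
  ∀ x : K,
    (∃ r : D, r ≠ 0 ∧ ∀ n : ℕ, 1 ≤ n →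
      ∃ d : D, algebraMap D K d = algebraMap D K r * x ^ n) →
    ∃ d : D, algebraMap D K d = x

/-- The `v`-operation: `I_v = (I⁻¹)⁻¹`, viewed as a `D`-submodule of `K`. -/
noncomputable def vSub (I : FractionalIdeal D⁰ K) : Submodule D K :=
  (((I⁻¹)⁻¹ : FractionalIdeal D⁰ K) : Submodule D K)

/-- The `t`-operation: `I_t = ⋃ {J_v : J ⊆ I nonzero finitely generated}`. -/
noncomputable def tSub (I : FractionalIdeal D⁰ K) : Submodule D K :=
  ⨆ J : {J : FractionalIdeal D⁰ K // J ≠ 0 ∧ (J : Submodule D K).FG ∧ J ≤ I}, vSub D K J.1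

/-- A fractional ideal `I` is `t`-invertible if `(I * I⁻¹)_t = D`. -/
noncomputable def IsTInvertible (I : FractionalIdeal D⁰ K) : Prop :=
  tSub D K (I * I⁻¹) = ((1 : FractionalIdeal D⁰ K) : Submodule D K)

/-- An integral ideal `I` of `D` is a `t`-ideal if `I_t = I`. -/
noncomputable def IsTIdeal (I : Ideal D) : Prop :=
  tSub D K (I : FractionalIdeal D⁰ K) = ((I : FractionalIdeal D⁰ K) : Submodule D K)

/-- `D` is a PVMD: every nonzero finitely generated integral ideal is `t`-invertible. -/
noncomputable def IsPVMD : Prop :=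
  ∀ I : Ideal D, I ≠ ⊥ → I.FG → IsTInvertible D K (I : FractionalIdeal D⁰ K)


section Aux
set_option linter.unusedSectionVars false
open FractionalIdeal
namespace Aux
variable {D K}


theorem inv_ne_zero0 {I : FractionalIdeal D⁰ K} (hI : I ≠ 0) : I⁻¹ ≠ 0 := by
  obtain ⟨a, haD, ha⟩ := I.isFractional
  have hmem : algebraMap D K a ∈ I⁻¹ := by
    rw [mem_inv_iff hI]
    intro y hy
    obtain ⟨d, hd⟩ := ha y hy
    rw [mem_one_iff]
    exact ⟨d, by rw [hd, Algebra.smul_def]⟩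
  intro h0
  rw [h0, mem_zero_iff] at hmem
  exact IsFractionRing.to_map_ne_zero_of_mem_nonZeroDivisors haD hmem

theorem exists_ne_zero_mem {I : FractionalIdeal D⁰ K} (hI : I ≠ 0) :
    ∃ x ∈ I, x ≠ (0 : K) := by
  by_contra h
  push_neg at h
  exact hI (eq_zero_iff.mpr h)

theorem ne_zero_of_le {I J : FractionalIdeal D⁰ K} (hI : I ≠ 0) (h : I ≤ J) : J ≠ 0 := by
  obtain ⟨x, hx, hx0⟩ := exists_ne_zero_mem hI
  intro h0
  subst h0
  exact hx0 ((mem_zero_iff D⁰).mp (h hx))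

theorem mul_ne_zero0 {I J : FractionalIdeal D⁰ K} (hI : I ≠ 0) (hJ : J ≠ 0) : I * J ≠ 0 := by
  obtain ⟨x, hx, hx0⟩ := exists_ne_zero_mem hI
  obtain ⟨y, hy, hy0⟩ := exists_ne_zero_mem hJ
  intro h0
  have : x * y ∈ I * J := mul_mem_mul hx hy
  rw [h0, mem_zero_iff] at this
  exact mul_ne_zero hx0 hy0 this

theorem pow_ne_zero0 {I : FractionalIdeal D⁰ K} (hI : I ≠ 0) (n : ℕ) : I ^ n ≠ 0 := by
  induction n with
  | zero => rw [pow_zero]; exact one_ne_zero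
  | succ n ih => rw [pow_succ]; exact mul_ne_zero0 ih hI

theorem le_vId {I : FractionalIdeal D⁰ K} (hI : I ≠ 0) : I ≤ (I⁻¹)⁻¹ :=
  fun x hx => (mem_inv_iff (inv_ne_zero0 hI)).mpr
    (fun y hy => mul_comm x y ▸ (mem_inv_iff hI).mp hy x hx)

theorem vId_mono {I J : FractionalIdeal D⁰ K} (hJ : J ≠ 0) (h : J ≤ I) :
    (J⁻¹)⁻¹ ≤ (I⁻¹)⁻¹ :=
  inv_anti_mono (inv_ne_zero0 (ne_zero_of_le hJ h)) (inv_ne_zero0 hJ)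
    (inv_anti_mono hJ (ne_zero_of_le hJ h) h)

theorem one_inv' : (1 : FractionalIdeal D⁰ K)⁻¹ = 1 := by
  rw [inv_eq, FractionalIdeal.div_one]

theorem mul_inv_le_one' (I : FractionalIdeal D⁰ K) : I * I⁻¹ ≤ 1 := mul_one_div_le_one


theorem spanSingleton_mul_inv0 {c : K} (hc : c ≠ 0) {I : FractionalIdeal D⁰ K} (hI : I ≠ 0) :
    (spanSingleton D⁰ c * I)⁻¹ = spanSingleton D⁰ c⁻¹ * I⁻¹ := by
  have hsc : spanSingleton D⁰ c ≠ 0 := spanSingleton_ne_zero_iff.mpr hc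
  have hcI : spanSingleton D⁰ c * I ≠ 0 := mul_ne_zero0 hsc hI
  apply le_antisymm
  · intro x hx
    replace hx : x ∈ (spanSingleton D⁰ c * I)⁻¹ := hx
    show x ∈ spanSingleton D⁰ c⁻¹ * I⁻¹
    rw [mem_inv_iff hcI] at hx
    have hcx : c * x ∈ I⁻¹ := by
      rw [mem_inv_iff hI]
      intro y hy
      have := hx (c * y) (mul_mem_mul (mem_spanSingleton_self D⁰ c) hy)
      rwa [show x * (c * y) = c * x * y by ring] at this
    have : x = c⁻¹ * (c * x) := by field_simp
    rw [this]
    exact mul_mem_mul (mem_spanSingleton_self D⁰ c⁻¹) hcx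
  · rw [inv_eq (I := spanSingleton D⁰ c * I), le_div_iff_mul_le hcI]
    have : spanSingleton D⁰ c⁻¹ * I⁻¹ * (spanSingleton D⁰ c * I)
        = (spanSingleton D⁰ c⁻¹ * spanSingleton D⁰ c) * (I⁻¹ * I) := by ring
    rw [this, spanSingleton_mul_spanSingleton, inv_mul_cancel₀ hc, spanSingleton_one, one_mul,
      mul_comm]
    exact mul_inv_le_one' I

theorem vId_spanSingleton_mul {c : K} (hc : c ≠ 0) {I : FractionalIdeal D⁰ K} (hI : I ≠ 0) :
    ((spanSingleton D⁰ c * I)⁻¹)⁻¹ = spanSingleton D⁰ c * (I⁻¹)⁻¹ := by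
  rw [spanSingleton_mul_inv0 hc hI, spanSingleton_mul_inv0 (inv_ne_zero hc) (inv_ne_zero0 hI),
    inv_inv c]

theorem vId_mul_le {I J : FractionalIdeal D⁰ K} (hI : I ≠ 0) (hJ : J ≠ 0) :
    (I⁻¹)⁻¹ * (J⁻¹)⁻¹ ≤ ((I * J)⁻¹)⁻¹ := by
  rw [mul_le]
  intro a ha b hb
  rw [mem_inv_iff (inv_ne_zero0 (mul_ne_zero0 hI hJ))]
  intro y hy
  have h1 : ∀ u ∈ I, y * u ∈ J⁻¹ := by
    intro u hu
    rw [mem_inv_iff hJ]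
    intro w hw
    have := (mem_inv_iff (mul_ne_zero0 hI hJ)).mp hy (u * w) (mul_mem_mul hu hw)
    rwa [show y * (u * w) = y * u * w by ring] at this
  have h2 : y * b ∈ I⁻¹ := by
    rw [mem_inv_iff hI]
    intro u hu
    have := (mem_inv_iff (inv_ne_zero0 hJ)).mp hb (y * u) (h1 u hu)
    rwa [show b * (y * u) = y * b * u by ring] at this
  have := (mem_inv_iff (inv_ne_zero0 hI)).mp ha (y * b) h2
  rwa [show a * (y * b) = a * b * y by ring] at this


theorem pow_le_one0 {J : FractionalIdeal D⁰ K} (h : J ≤ 1) (n : ℕ) : J ^ n ≤ 1 := by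
  induction n with
  | zero => rw [pow_zero]
  | succ n ih =>
    rw [pow_succ]
    calc J ^ n * J ≤ J ^ n * 1 := mul_right_mono h
    _ ≤ 1 * 1 := mul_left_mono ih
    _ = 1 := one_mul 1

theorem tSub_le_vId (I : FractionalIdeal D⁰ K) :
    tSub D K I ≤ (((I⁻¹)⁻¹ : FractionalIdeal D⁰ K) : Submodule D K) := by
  apply iSup_le
  rintro ⟨J, hJ0, hfg, hle⟩
  exact coe_le_coe.mpr (vId_mono hJ0 hle)

theorem le_tSub (I : FractionalIdeal D⁰ K) : (I : Submodule D K) ≤ tSub D K I := by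
  intro x hx
  by_cases hx0 : x = 0
  · simp [hx0]
  · have hJle : spanSingleton D⁰ x ≤ I := spanSingleton_le_iff_mem.mpr hx
    have hJ0 : spanSingleton D⁰ x ≠ 0 := spanSingleton_ne_zero_iff.mpr hx0
    have hfg : ((spanSingleton D⁰ x : FractionalIdeal D⁰ K) : Submodule D K).FG := by
      rw [coe_spanSingleton]; exact Submodule.fg_span_singleton x
    have hmem : x ∈ vSub D K (spanSingleton D⁰ x) :=
      le_vId hJ0 (mem_spanSingleton_self D⁰ x)
    exact Submodule.mem_iSup_of_mem ⟨_, hJ0, hfg, hJle⟩ hmem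

theorem tSub_mono {I I' : FractionalIdeal D⁰ K} (h : I ≤ I') : tSub D K I ≤ tSub D K I' := by
  apply iSup_le
  rintro ⟨J, hJ0, hfg, hle⟩
  exact le_iSup (fun J : {J : FractionalIdeal D⁰ K // J ≠ 0 ∧ (J : Submodule D K).FG ∧ J ≤ I'} =>
    vSub D K J.1) ⟨J, hJ0, hfg, hle.trans h⟩

theorem tSub_le_one {I : FractionalIdeal D⁰ K} (h : I ≤ 1) :
    tSub D K I ≤ ((1 : FractionalIdeal D⁰ K) : Submodule D K) := by
  apply iSup_le
  rintro ⟨J, hJ0, hfg, hle⟩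
  have h1 : (J⁻¹)⁻¹ ≤ ((1 : FractionalIdeal D⁰ K)⁻¹)⁻¹ := vId_mono hJ0 (hle.trans h)
  rw [one_inv', one_inv'] at h1
  exact coe_le_coe.mpr h1

theorem mul_tSub (M A : FractionalIdeal D⁰ K) :
    (M : Submodule D K) * tSub D K A ≤ tSub D K (M * A) := by
  rw [tSub, Submodule.mul_iSup]
  apply iSup_le
  rintro ⟨J, hJ0, hfg, hle⟩
  apply Submodule.mul_le.mpr
  intro y hy u hu
  by_cases hy0 : y = 0
  · simp [hy0]
  · have hsy : spanSingleton D⁰ y ≠ 0 := spanSingleton_ne_zero_iff.mpr hy0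
    have hmem : y * u ∈ vSub D K (spanSingleton D⁰ y * J) := by
      show y * u ∈ (((spanSingleton D⁰ y * J)⁻¹)⁻¹ : FractionalIdeal D⁰ K)
      rw [vId_spanSingleton_mul hy0 hJ0]
      exact mul_mem_mul (mem_spanSingleton_self D⁰ y) hu
    refine Submodule.mem_iSup_of_mem ⟨spanSingleton D⁰ y * J, mul_ne_zero0 hsy hJ0, ?_, ?_⟩ hmem
    · rw [coe_mul, coe_spanSingleton]
      exact Submodule.FG.mul (Submodule.fg_span_singleton y) hfg
    · exact mul_le.mpr fun i hi j hj =>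
        mul_mem_mul (spanSingleton_le_iff_mem.mpr hy hi) (hle hj)

theorem tSub_mul_tSub (A A' : FractionalIdeal D⁰ K) :
    tSub D K A * tSub D K A' ≤ tSub D K (A * A') := by
  rw [tSub, tSub, Submodule.iSup_mul]
  apply iSup_le
  rintro ⟨J, hJ0, hfg, hle⟩
  rw [Submodule.mul_iSup]
  apply iSup_le
  rintro ⟨J', hJ0', hfg', hle'⟩
  have h1 : vSub D K J * vSub D K J' ≤ vSub D K (J * J') := by
    show (((J⁻¹)⁻¹ : FractionalIdeal D⁰ K) : Submodule D K) * (((J'⁻¹)⁻¹ : FractionalIdeal D⁰ K) : Submodule D K) ≤ _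
    rw [← coe_mul]
    exact coe_le_coe.mpr (vId_mul_le hJ0 hJ0')
  refine h1.trans ?_
  exact le_iSup (fun J : {J : FractionalIdeal D⁰ K // J ≠ 0 ∧ (J : Submodule D K).FG ∧ J ≤ A * A'} =>
    vSub D K J.1) ⟨J * J', mul_ne_zero0 hJ0 hJ0',
      by rw [coe_mul]; exact Submodule.FG.mul hfg hfg',
      mul_le.mpr fun i hi j hj => mul_mem_mul (hle hi) (hle' hj)⟩

theorem tSub_one : tSub D K 1 = ((1 : FractionalIdeal D⁰ K) : Submodule D K) :=
  le_antisymm (tSub_le_one le_rfl) (le_tSub 1)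


theorem tSub_pow {J : FractionalIdeal D⁰ K} (hle : J ≤ 1)
    (h1 : tSub D K J = ((1 : FractionalIdeal D⁰ K) : Submodule D K)) (n : ℕ) :
    tSub D K (J ^ n) = ((1 : FractionalIdeal D⁰ K) : Submodule D K) := by
  induction n with
  | zero => rw [pow_zero]; exact tSub_one
  | succ n ih =>
    refine le_antisymm (tSub_le_one (pow_le_one0 hle (n + 1))) ?_
    have h2 : ((1 : FractionalIdeal D⁰ K) : Submodule D K) = tSub D K (J ^ n) * tSub D K J := by
      rw [ih, h1, coe_one, one_mul]
    rw [h2]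
    exact (tSub_mul_tSub _ _).trans (le_of_eq (by rw [← pow_succ]))

end Aux
end Aux

/-- A PVMD `D` is completely integrally closed iff `⋂_{n ≥ 1} (I^n)_v = (0)` for
every proper `t`-invertible integral `t`-ideal `I` of `D`. -/
theorem stmt_7 (hD : IsPVMD D K) :
    IsCompletelyIntegrallyClosed D K ↔
      ∀ I : Ideal D, I ≠ ⊤ → IsTIdeal D K I → IsTInvertible D K (I : FractionalIdeal D⁰ K) →
        (⨅ (n : ℕ) (_ : 1 ≤ n), vSub D K ((I : FractionalIdeal D⁰ K) ^ n)) = ⊥ := by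
  classical
  constructor
  · intro hCIC I hItop hIt hTinv
    have h1sub_ne : ((1 : FractionalIdeal D⁰ K) : Submodule D K) ≠ ⊥ := by
      intro h
      have h1 : (1 : K) ∈ ((1 : FractionalIdeal D⁰ K) : Submodule D K) :=
        FractionalIdeal.one_mem_one D⁰
      rw [h, Submodule.mem_bot] at h1
      exact one_ne_zero h1
    have hIbot : I ≠ ⊥ := by
      rintro rfl
      rw [IsTInvertible, FractionalIdeal.coeIdeal_bot, FractionalIdeal.inv_zero',
        mul_zero] at hTinv
      have he : IsEmpty {J : FractionalIdeal D⁰ K //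
          J ≠ 0 ∧ (J : Submodule D K).FG ∧ J ≤ (0 : FractionalIdeal D⁰ K)} := by
        refine ⟨fun J => J.2.1 ?_⟩
        exact FractionalIdeal.eq_zero_iff.mpr fun x hx =>
          (FractionalIdeal.mem_zero_iff D⁰).mp (J.2.2.2 hx)
      rw [tSub, iSup_of_empty] at hTinv
      exact h1sub_ne hTinv.symm
    have hIf0 : (I : FractionalIdeal D⁰ K) ≠ 0 := FractionalIdeal.coeIdeal_ne_zero.mpr hIbot
    have hIfle1 : (I : FractionalIdeal D⁰ K) ≤ 1 := FractionalIdeal.coeIdeal_le_one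
    have hone_le_inv : 1 ≤ (I : FractionalIdeal D⁰ K)⁻¹ := by
      rw [FractionalIdeal.inv_eq, FractionalIdeal.le_div_iff_mul_le hIf0, one_mul]
      exact hIfle1
    have hnotle : ¬ (I : FractionalIdeal D⁰ K)⁻¹ ≤ 1 := by
      intro hle
      have heq : (I : FractionalIdeal D⁰ K)⁻¹ = 1 := le_antisymm hle hone_le_inv
      rw [IsTInvertible, heq, mul_one, hIt] at hTinv
      refine hItop (FractionalIdeal.coeIdeal_injective (K := K)
        (show (I : FractionalIdeal D⁰ K) = ((⊤ : Ideal D) : FractionalIdeal D⁰ K) from ?_))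
      rw [FractionalIdeal.coeIdeal_top]
      exact FractionalIdeal.coeToSubmodule_injective hTinv
    obtain ⟨u, huI, huD⟩ := SetLike.not_le_iff_exists.mp hnotle
    rw [eq_bot_iff]
    intro x hx
    rw [Submodule.mem_bot]
    by_contra hx0
    have hxv : ∀ n, 1 ≤ n →
        x ∈ ((((I : FractionalIdeal D⁰ K) ^ n)⁻¹)⁻¹ : FractionalIdeal D⁰ K) := by
      intro n hn
      have h1 := (Submodule.mem_iInf _).mp hx n
      exact (Submodule.mem_iInf _).mp h1 hn
    have hx1 : x ∈ (1 : FractionalIdeal D⁰ K) := by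
      have h := hxv 1 le_rfl
      rw [pow_one] at h
      have h2 : (((I : FractionalIdeal D⁰ K))⁻¹)⁻¹ ≤ (1 : FractionalIdeal D⁰ K)⁻¹ :=
        FractionalIdeal.inv_anti_mono one_ne_zero (Aux.inv_ne_zero0 hIf0) hone_le_inv
      rw [Aux.one_inv'] at h2
      exact h2 h
    obtain ⟨d, hd⟩ := (FractionalIdeal.mem_one_iff D⁰).mp hx1
    have hd0 : d ≠ 0 := fun h => hx0 (by rw [← hd, h, map_zero])
    have hun : ∀ n : ℕ, 1 ≤ n → ∃ e : D, algebraMap D K e = algebraMap D K d * u ^ n := by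
      intro n hn
      have hIfn0 : (I : FractionalIdeal D⁰ K) ^ n ≠ 0 := Aux.pow_ne_zero0 hIf0 n
      have hle : ((I : FractionalIdeal D⁰ K)⁻¹) ^ n ≤ ((I : FractionalIdeal D⁰ K) ^ n)⁻¹ := by
        rw [FractionalIdeal.inv_eq (I := (I : FractionalIdeal D⁰ K) ^ n),
          FractionalIdeal.le_div_iff_mul_le hIfn0, ← mul_pow]
        refine Aux.pow_le_one0 ?_ n
        rw [mul_comm]
        exact Aux.mul_inv_le_one' _
      have hu_n : u ^ n ∈ ((I : FractionalIdeal D⁰ K)⁻¹) ^ n := by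
        have h3 : u ^ n ∈ (((I : FractionalIdeal D⁰ K)⁻¹ : FractionalIdeal D⁰ K) :
            Submodule D K) ^ n :=
          Submodule.pow_mem_pow (M := (((I : FractionalIdeal D⁰ K)⁻¹ : FractionalIdeal D⁰ K) :
            Submodule D K)) huI n
        rwa [← FractionalIdeal.coe_pow] at h3
      have h4 := (FractionalIdeal.mem_inv_iff (Aux.inv_ne_zero0 hIfn0)).mp
        (hxv n hn) (u ^ n) (hle hu_n)
      obtain ⟨e, he⟩ := (FractionalIdeal.mem_one_iff D⁰).mp h4
      exact ⟨e, by rw [he, hd]⟩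
    obtain ⟨e, he⟩ := hCIC u ⟨d, hd0, hun⟩
    exact huD ((FractionalIdeal.mem_one_iff D⁰).mpr ⟨e, he⟩)
  · intro hMain x hx
    obtain ⟨r, hr, hpow⟩ := hx
    by_contra hxD
    have hx1 : x ∉ (1 : FractionalIdeal D⁰ K) := fun h =>
      hxD ((FractionalIdeal.mem_one_iff D⁰).mp h)
    obtain ⟨a, b, hbD, hab⟩ := IsFractionRing.div_surjective (A := D) x
    set β := algebraMap D K b with hβ
    have hβ0 : β ≠ 0 := IsFractionRing.to_map_ne_zero_of_mem_nonZeroDivisors hbD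
    set B : FractionalIdeal D⁰ K := 1 + FractionalIdeal.spanSingleton D⁰ x with hB
    have hone0 : (1 : FractionalIdeal D⁰ K) ≠ 0 := fun h =>
      one_ne_zero ((FractionalIdeal.mem_zero_iff D⁰).mp (h ▸ FractionalIdeal.one_mem_one D⁰))
    have hB1 : (1 : FractionalIdeal D⁰ K) ≤ B := by
      rw [hB, ← FractionalIdeal.sup_eq_add]; exact le_sup_left
    have hB0 : B ≠ 0 := Aux.ne_zero_of_le hone0 hB1
    have hxle : FractionalIdeal.spanSingleton D⁰ x ≤ B := by
      rw [hB, ← FractionalIdeal.sup_eq_add]; exact le_sup_right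
    have hxB : x ∈ B := hxle (FractionalIdeal.mem_spanSingleton_self D⁰ x)
    set A : Ideal D := Ideal.span {b, a} with hA
    have hAfg : A.FG := Submodule.fg_span (Set.toFinite _)
    have hAbot : A ≠ ⊥ := by
      intro h
      have hbA : b ∈ A := Ideal.subset_span (by simp)
      rw [h, Ideal.mem_bot] at hbA
      exact nonZeroDivisors.ne_zero hbD hbA
    have hβx : β * x = algebraMap D K a := by
      rw [← hab, mul_comm, div_mul_cancel₀ _ hβ0]
    have hcoeA : (A : FractionalIdeal D⁰ K) = FractionalIdeal.spanSingleton D⁰ β * B := by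
      rw [hB, mul_add, mul_one, FractionalIdeal.spanSingleton_mul_spanSingleton, hβx]
      rw [hA, show ({b, a} : Set D) = insert b {a} from rfl, Ideal.span_insert,
        FractionalIdeal.coeIdeal_sup, FractionalIdeal.coeIdeal_span_singleton,
        FractionalIdeal.coeIdeal_span_singleton]
    have hTA : tSub D K ((A : FractionalIdeal D⁰ K) * (A : FractionalIdeal D⁰ K)⁻¹)
        = ((1 : FractionalIdeal D⁰ K) : Submodule D K) := hD A hAbot hAfg
    set C : FractionalIdeal D⁰ K := B⁻¹ with hC
    have hC0 : C ≠ 0 := Aux.inv_ne_zero0 hB0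
    have hABinv : (A : FractionalIdeal D⁰ K) * (A : FractionalIdeal D⁰ K)⁻¹ = B * C := by
      rw [hcoeA, Aux.spanSingleton_mul_inv0 hβ0 hB0,
        show FractionalIdeal.spanSingleton D⁰ β * B *
            (FractionalIdeal.spanSingleton D⁰ β⁻¹ * B⁻¹) =
          FractionalIdeal.spanSingleton D⁰ β * FractionalIdeal.spanSingleton D⁰ β⁻¹ *
            (B * B⁻¹) by ring,
        FractionalIdeal.spanSingleton_mul_spanSingleton, mul_inv_cancel₀ hβ0,
        FractionalIdeal.spanSingleton_one, one_mul, hC]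
    have hTB : tSub D K (B * C) = ((1 : FractionalIdeal D⁰ K) : Submodule D K) := by
      rw [← hABinv]; exact hTA
    have hCle1 : C ≤ 1 := by
      have h2 := FractionalIdeal.inv_anti_mono hone0 hB0 hB1
      rwa [Aux.one_inv'] at h2
    obtain ⟨I₀, hI₀⟩ := FractionalIdeal.le_one_iff_exists_coeIdeal.mp hCle1
    have hBvC : B ≤ C⁻¹ := Aux.le_vId hB0
    have hI₀top : I₀ ≠ ⊤ := by
      rintro rfl
      rw [FractionalIdeal.coeIdeal_top] at hI₀
      rw [← hI₀, Aux.one_inv'] at hBvC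
      exact hx1 (hBvC hxB)
    have hvC : (C⁻¹)⁻¹ = C :=
      le_antisymm (FractionalIdeal.inv_anti_mono hB0 (Aux.ne_zero_of_le hB0 hBvC) hBvC)
        (Aux.le_vId hC0)
    have hTIdeal : IsTIdeal D K I₀ := by
      rw [IsTIdeal, hI₀]
      exact le_antisymm ((Aux.tSub_le_vId C).trans (le_of_eq (by rw [hvC]))) (Aux.le_tSub C)
    have hTinvC : IsTInvertible D K (I₀ : FractionalIdeal D⁰ K) := by
      rw [IsTInvertible, hI₀]
      refine le_antisymm (Aux.tSub_le_one (Aux.mul_inv_le_one' C)) ?_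
      rw [← hTB]
      refine Aux.tSub_mono (FractionalIdeal.mul_le.mpr fun i hi j hj => ?_)
      rw [mul_comm i j]
      exact FractionalIdeal.mul_mem_mul hj (hBvC hi)
    have hbot := hMain I₀ hI₀top hTIdeal hTinvC
    set rK := algebraMap D K r with hrK
    have hrK0 : rK ≠ 0 := fun h => hr (IsFractionRing.to_map_eq_zero_iff.mp h)
    have hrx : ∀ k : ℕ, rK * x ^ k ∈ (1 : FractionalIdeal D⁰ K) := by
      intro k
      rcases Nat.eq_zero_or_pos k with hk | hk
      · subst hk
        rw [pow_zero, mul_one]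
        exact (FractionalIdeal.mem_one_iff D⁰).mpr ⟨r, rfl⟩
      · obtain ⟨d, hd⟩ := hpow k hk
        exact (FractionalIdeal.mem_one_iff D⁰).mpr ⟨d, hd⟩
    have hkey : ∀ m : ℕ, ∀ k : ℕ,
        FractionalIdeal.spanSingleton D⁰ (rK * x ^ k) * B ^ m ≤ 1 := by
      intro m
      induction m with
      | zero =>
        intro k
        rw [pow_zero, mul_one, FractionalIdeal.spanSingleton_le_iff_mem]
        exact hrx k
      | succ m ih =>
        intro k
        rw [show FractionalIdeal.spanSingleton D⁰ (rK * x ^ k) * B ^ (m + 1)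
            = FractionalIdeal.spanSingleton D⁰ (rK * x ^ k) * B * B ^ m by
          rw [pow_succ]; ring]
        rw [hB, mul_add, mul_one, FractionalIdeal.spanSingleton_mul_spanSingleton, add_mul,
          show rK * x ^ k * x = rK * x ^ (k + 1) by ring, ← FractionalIdeal.sup_eq_add]
        rw [← hB]
        exact sup_le (ih k) (ih (k + 1))
    have hrB : ∀ n : ℕ, rK ∈ ((B ^ n)⁻¹ : FractionalIdeal D⁰ K) := by
      intro n
      rw [FractionalIdeal.mem_inv_iff (Aux.pow_ne_zero0 hB0 n)]
      intro y hy
      have h5 := hkey n 0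
      rw [pow_zero, mul_one] at h5
      exact h5 (FractionalIdeal.mul_mem_mul (FractionalIdeal.mem_spanSingleton_self D⁰ rK) hy)
    have hrmem : ∀ n : ℕ, 1 ≤ n → rK ∈ vSub D K ((I₀ : FractionalIdeal D⁰ K) ^ n) := by
      intro n _
      rw [show vSub D K ((I₀ : FractionalIdeal D⁰ K) ^ n) = vSub D K (C ^ n) by rw [hI₀]]
      have hTpow : tSub D K ((B * C) ^ n) = ((1 : FractionalIdeal D⁰ K) : Submodule D K) := by
        refine Aux.tSub_pow ?_ hTB n
        rw [hC]
        exact Aux.mul_inv_le_one' B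
      have step1 : (((B ^ n)⁻¹ : FractionalIdeal D⁰ K) : Submodule D K)
          ≤ tSub D K ((B ^ n)⁻¹ * (B * C) ^ n) := by
        calc (((B ^ n)⁻¹ : FractionalIdeal D⁰ K) : Submodule D K)
            = (((B ^ n)⁻¹ : FractionalIdeal D⁰ K) : Submodule D K) *
              ((1 : FractionalIdeal D⁰ K) : Submodule D K) := by
              rw [FractionalIdeal.coe_one, mul_one]
          _ = (((B ^ n)⁻¹ : FractionalIdeal D⁰ K) : Submodule D K) * tSub D K ((B * C) ^ n) := by
              rw [hTpow]
          _ ≤ tSub D K ((B ^ n)⁻¹ * (B * C) ^ n) := Aux.mul_tSub _ _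
      have step2 : (B ^ n)⁻¹ * (B * C) ^ n ≤ C ^ n := by
        rw [mul_pow, show (B ^ n)⁻¹ * (B ^ n * C ^ n) = (B ^ n)⁻¹ * B ^ n * C ^ n by ring]
        have h6 : (B ^ n)⁻¹ * B ^ n ≤ 1 := by
          rw [mul_comm]; exact Aux.mul_inv_le_one' (B ^ n)
        calc (B ^ n)⁻¹ * B ^ n * C ^ n ≤ 1 * C ^ n := mul_left_mono h6
          _ = C ^ n := one_mul _
      have step3 := Aux.tSub_mono step2
      have step4 : tSub D K (C ^ n) ≤ vSub D K (C ^ n) := Aux.tSub_le_vId (C ^ n)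
      exact step4 (step3 (step1 (hrB n)))
    have hmem : rK ∈ (⊥ : Submodule D K) := by
      rw [← hbot]
      exact (Submodule.mem_iInf _).mpr fun n => (Submodule.mem_iInf _).mpr fun hn => hrmem n hn
    rw [Submodule.mem_bot] at hmem
    exact hrK0 hmem
end

section
/- Let D be a completely integrally closed domain and let I be a nonzero ideal of D with I_v ≠ D. Then there exist a, b ∈ D with (b) ⊄ (a) such that I ⊆ (a/b)D as fractional ideals, and consequently (I^n)_v ⊆ (a/b)^n D for every n ≥ 1. -/
open scoped nonZeroDivisors

variable (D : Type*) [CommRing D] [IsDomain D]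
variable (K : Type*) [Field K] [Algebra D K] [IsFractionRing D K]

/-- Let `D` be completely integrally closed and `I` a nonzero ideal of `D` with `I_v ≠ D`.
Then there are `a, b ∈ D` with `(b) ⊄ (a)` such that `I ⊆ (a/b)D`, and consequently
`(I^n)_v ⊆ (a/b)^n D` for every `n ≥ 1`. -/
theorem stmt_19 (hD : IsCompletelyIntegrallyClosed D K)
    (I : Ideal D) (hI0 : I ≠ ⊥)
    (hIv : (((I : FractionalIdeal D⁰ K)⁻¹)⁻¹ : FractionalIdeal D⁰ K) ≠ 1) :
    ∃ a b : D, ¬ Ideal.span {b} ≤ Ideal.span {a} ∧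
      ((I : FractionalIdeal D⁰ K) : Submodule D K) ≤
        Submodule.span D {algebraMap D K a / algebraMap D K b} ∧
      ∀ n : ℕ, 1 ≤ n →
        ((((((I : FractionalIdeal D⁰ K) ^ n)⁻¹)⁻¹ : FractionalIdeal D⁰ K)) : Submodule D K) ≤
          Submodule.span D {(algebraMap D K a / algebraMap D K b) ^ n} := by
  classical
  have hI0' : (I : FractionalIdeal D⁰ K) ≠ 0 :=
    (FractionalIdeal.coeIdeal_ne_zero).mpr hI0
  have hIinv_ne : ((I : FractionalIdeal D⁰ K)⁻¹ : FractionalIdeal D⁰ K) ≠ 1 := by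
    intro h; exact hIv (by rw [h, inv_one])
  have hle : (1 : FractionalIdeal D⁰ K) ≤ (I : FractionalIdeal D⁰ K)⁻¹ := by
    have h := FractionalIdeal.inv_anti_mono (I := (I : FractionalIdeal D⁰ K))
      (J := (1 : FractionalIdeal D⁰ K)) hI0' one_ne_zero FractionalIdeal.coeIdeal_le_one
    simpa using h
  obtain ⟨u, huI, hu1⟩ : ∃ u, u ∈ ((I : FractionalIdeal D⁰ K)⁻¹) ∧
      u ∉ (1 : FractionalIdeal D⁰ K) := by
    by_contra h
    push_neg at h
    exact hIinv_ne (le_antisymm (fun x hx => h x hx) hle)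
  have hu0 : u ≠ 0 := fun h => hu1 (h ▸ (FractionalIdeal.mem_one_iff _).mpr ⟨0, map_zero _⟩)
  obtain ⟨c, d, hd, hcd⟩ := IsFractionRing.div_surjective (A := D) (K := K) u
  have hdK : algebraMap D K d ≠ 0 :=
    IsFractionRing.to_map_ne_zero_of_mem_nonZeroDivisors hd
  have hcK : algebraMap D K c ≠ 0 := by
    intro h
    apply hu0
    rw [← hcd, h, zero_div]
  set v : K := algebraMap D K d / algebraMap D K c with hv
  have hvu : v = u⁻¹ := by
    rw [hv, ← hcd, inv_div]
  have hv0 : v ≠ 0 := by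
    rw [hvu]; exact inv_ne_zero hu0
  -- key containment
  have key : (I : FractionalIdeal D⁰ K) ≤ FractionalIdeal.spanSingleton D⁰ v := by
    intro x hx
    have hux : u * x ∈ (1 : FractionalIdeal D⁰ K) :=
      (FractionalIdeal.mem_inv_iff hI0').mp huI x hx
    obtain ⟨t, ht⟩ := (FractionalIdeal.mem_one_iff _).mp hux
    rw [FractionalIdeal.mem_spanSingleton]
    refine ⟨t, ?_⟩
    rw [hvu, Algebra.smul_def, ht, mul_comm u x, mul_assoc, mul_inv_cancel₀ hu0, mul_one]
  have hpow : ∀ n : ℕ, ((I : FractionalIdeal D⁰ K)) ^ n ≤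
      FractionalIdeal.spanSingleton D⁰ (v ^ n) := by
    intro n
    rw [← FractionalIdeal.spanSingleton_pow]
    induction n with
    | zero => simp
    | succ k ih =>
      rw [pow_succ, pow_succ]
      exact le_trans (mul_left_mono (a := _) ih)
        (mul_right_mono (a := _) key)
  refine ⟨d, c, ?_, ?_, ?_⟩
  · intro h
    have hc : c ∈ Ideal.span {d} := h (Ideal.subset_span rfl)
    obtain ⟨t, ht⟩ := Ideal.mem_span_singleton.mp hc
    apply hu1
    rw [← hcd, ht, map_mul]
    rw [mul_comm, mul_div_assoc, div_self hdK, mul_one]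
    exact FractionalIdeal.coe_mem_one _ _
  · have := (FractionalIdeal.coe_le_coe (S := D⁰) (P := K)).mpr key
    rwa [FractionalIdeal.coe_spanSingleton] at this
  · intro n _
    have h1 : ((I : FractionalIdeal D⁰ K) ^ n)⁻¹⁻¹ ≤
        FractionalIdeal.spanSingleton D⁰ (v ^ n) := by
      have hIn0 : ((I : FractionalIdeal D⁰ K)) ^ n ≠ 0 := by
        rw [← FractionalIdeal.coeIdeal_pow, FractionalIdeal.coeIdeal_ne_zero]
        obtain ⟨y, hy, hy0⟩ := Submodule.exists_mem_ne_zero_of_ne_bot hI0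
        exact Submodule.ne_bot_iff _ |>.mpr ⟨y ^ n, Ideal.pow_mem_pow hy n, pow_ne_zero n hy0⟩
      have hs0 : FractionalIdeal.spanSingleton D⁰ (v ^ n) ≠ 0 :=
        FractionalIdeal.spanSingleton_ne_zero_iff.mpr (pow_ne_zero _ hv0)
      have h2 := FractionalIdeal.inv_anti_mono hIn0 hs0 (hpow n)
      rw [FractionalIdeal.spanSingleton_inv] at h2
      have hs0' : FractionalIdeal.spanSingleton D⁰ (v ^ n)⁻¹ ≠ 0 :=
        FractionalIdeal.spanSingleton_ne_zero_iff.mpr (inv_ne_zero (pow_ne_zero _ hv0))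
      have hIinv0 : ((I : FractionalIdeal D⁰ K) ^ n)⁻¹ ≠ 0 := by
        intro h
        rw [h] at h2
        exact hs0' (le_antisymm h2 (FractionalIdeal.zero_le _))
      have h3 := FractionalIdeal.inv_anti_mono hs0' hIinv0 h2
      rwa [FractionalIdeal.spanSingleton_inv, inv_inv] at h3
    have := (FractionalIdeal.coe_le_coe (S := D⁰) (P := K)).mpr h1
    rwa [FractionalIdeal.coe_spanSingleton] at this
end
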